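/- Let (f̄_n)_{n≥1} be a sequence of positive reals with f̄_n → 1, ∑_n (1 − f̄_n)_+ = ∞, ∑_n (f̄_n − 1)_+ < ∞. For integers n, j, k with 1 ≤ j ≤ n − 1 define a_{n,j}^{(k)} = (1 − f̄_j) ∏_{i=j+1}^{n} f̄_i^k, and a_{n,n}^{(k)} = 1 − f̄_n. If (x_n)_{n≥1} is a bounded real sequence such that x_n → x ∈ ℝ as n → ∞ along the subsequence {n : f̄_n < 1}, then for every integer k ≥ 1, lim_{n→∞} ∑_{j=1}^{n} a_{n,j}^{(k)} x_j = x/k and lim_{n→∞} ∑_{j=1}^{n} |a_{n,j}^{(k)}| x_j = x/k. -/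

import Mathlib

open Filter Finset

private lemma abs_eq_add_two_max (t : ℝ) : |t| = t + 2 * max (-t) 0 := by
  rcases le_total t 0 with h | h
  · rw [abs_of_nonpos h, max_eq_left (by linarith)]; ring
  · rw [abs_of_nonneg h, max_eq_right (by linarith)]; ring

private lemma abs_eq_max_add_max (t : ℝ) : |t| = max t 0 + max (-t) 0 := by
  rcases le_total t 0 with h | h
  · rw [abs_of_nonpos h, max_eq_right h, max_eq_left (by linarith)]; ring
  · rw [abs_of_nonneg h, max_eq_left h, max_eq_right (by linarith)]; ring

private lemma max_eq_add_max (t : ℝ) : max t 0 = t + max (-t) 0 := by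
  rcases le_total t 0 with h | h
  · rw [max_eq_right h, max_eq_left (by linarith)]; ring
  · rw [max_eq_left h, max_eq_right (by linarith)]; ring

private lemma pow_sub_one_bound (g B : ℝ) (k : ℕ) (hg : 0 < g) (hgB : g ≤ B) (hB : 1 ≤ B) :
    max (g ^ k - 1) 0 ≤ (k : ℝ) * B ^ (k - 1) * max (g - 1) 0 := by
  rcases le_total g 1 with h | h
  · have h1 : g ^ k ≤ 1 := pow_le_one₀ hg.le h
    rw [max_eq_right (by linarith)]
    positivity
  · have h1 : (1:ℝ) ≤ g ^ k := one_le_pow₀ h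
    rw [max_eq_left (by linarith), max_eq_left (by linarith)]
    have hgeom : (∑ i ∈ range k, g ^ i) * (g - 1) = g ^ k - 1 := geom_sum_mul g k
    have hbound : ∑ i ∈ range k, g ^ i ≤ (k:ℝ) * B ^ (k - 1) := by
      calc ∑ i ∈ range k, g ^ i ≤ ∑ _i ∈ range k, B ^ (k - 1) := by
            refine Finset.sum_le_sum fun i hi => ?_
            calc g ^ i ≤ B ^ i := pow_le_pow_left₀ hg.le hgB i
              _ ≤ B ^ (k - 1) := pow_le_pow_right₀ hB (by simp at hi; omega)
        _ = (k:ℝ) * B ^ (k - 1) := by rw [Finset.sum_const, Finset.card_range, nsmul_eq_mul]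
    nlinarith [hbound, hgeom]

private lemma abs_one_sub_le (g : ℝ) (k : ℕ) (hk : 1 ≤ k) (hg : 0 < g) :
    |1 - g| ≤ max (1 - g ^ k) 0 + max (g ^ k - 1) 0 := by
  rcases le_total g 1 with h | h
  · have h1 : g ^ k ≤ g := pow_le_of_le_one hg.le h (by omega)
    rw [abs_of_nonneg (by linarith)]
    calc 1 - g ≤ 1 - g ^ k := by linarith
      _ ≤ max (1 - g ^ k) 0 := le_max_left _ _
      _ ≤ _ := le_add_of_nonneg_right (le_max_right _ _)
  · have h1 : g ≤ g ^ k := le_self_pow₀ h (by omega)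
    rw [abs_of_nonpos (by linarith)]
    calc -(1 - g) = g - 1 := by ring
      _ ≤ g ^ k - 1 := by linarith
      _ ≤ max (g ^ k - 1) 0 := le_max_left _ _
      _ ≤ _ := le_add_of_nonneg_left (le_max_right _ _)

private lemma tele (b : ℕ → ℝ) : ∀ n, ∑ j ∈ Icc 1 n, (1 - b j) * ∏ i ∈ Icc (j+1) n, b i
    = 1 - ∏ i ∈ Icc 1 n, b i := by
  intro n
  induction n with
  | zero => simp
  | succ n ih =>
    rw [Finset.sum_Icc_succ_top (by omega : 1 ≤ n + 1)]
    have hprod : ∀ j ∈ Icc 1 n, (1 - b j) * ∏ i ∈ Icc (j+1) (n+1), b i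
        = ((1 - b j) * ∏ i ∈ Icc (j+1) n, b i) * b (n+1) := by
      intro j hj
      simp only [Finset.mem_Icc] at hj
      rw [Finset.prod_Icc_succ_top (by omega : j + 1 ≤ n + 1)]
      ring
    rw [Finset.sum_congr rfl hprod, ← Finset.sum_mul, ih,
      Finset.prod_Icc_succ_top (by omega : 1 ≤ n + 1)]
    have he : Icc (n+1+1) (n+1) = (∅ : Finset ℕ) := by
      rw [Finset.Icc_eq_empty]; omega
    rw [he, Finset.prod_empty]
    ring

private lemma key (c : ℕ → ℝ) (Q : ℕ → ℕ → ℝ) (hc : ∀ j, 0 ≤ c j)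
    (hQ : ∀ j n, 0 ≤ Q j n)
    (h1 : ∀ j, Tendsto (fun n => Q j n) atTop (nhds 0))
    (h2 : ∀ ε > 0, ∃ N, ∀ n, ∑ j ∈ Icc (N + 1) n, c j * Q j n ≤ ε) :
    Tendsto (fun n => ∑ j ∈ Icc 1 n, c j * Q j n) atTop (nhds 0) := by
  rw [Metric.tendsto_atTop]
  intro ε hε
  obtain ⟨N0, hN0⟩ := h2 (ε / 3) (by positivity)
  set N := max N0 1 with hNdef
  have hN : ∀ n, ∑ j ∈ Icc (N + 1) n, c j * Q j n ≤ ε / 3 := by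
    intro n
    refine le_trans (Finset.sum_le_sum_of_subset_of_nonneg ?_ ?_) (hN0 n)
    · exact Finset.Icc_subset_Icc (by omega) le_rfl
    · intro j _ _; exact mul_nonneg (hc j) (hQ j n)
  have hfin : Tendsto (fun n => ∑ j ∈ Icc 1 N, c j * Q j n) atTop (nhds 0) := by
    have h := tendsto_finset_sum (Icc 1 N) (fun j (_ : j ∈ Icc 1 N) => (h1 j).const_mul (c j))
    simpa using h
  obtain ⟨N2, hN2⟩ := Metric.tendsto_atTop.mp hfin (ε / 3) (by positivity)
  refine ⟨max N N2, fun n hn => ?_⟩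
  have hnN : N ≤ n := le_trans (le_max_left _ _) hn
  have hsplit : Icc 1 n = Icc 1 N ∪ Icc (N + 1) n := by
    ext j; simp only [Finset.mem_Icc, Finset.mem_union]; omega
  have hdisj : Disjoint (Icc 1 N) (Icc (N + 1) n) := by
    rw [Finset.disjoint_left]; intro a ha hb
    simp only [Finset.mem_Icc] at ha hb; omega
  rw [Real.dist_eq, sub_zero, hsplit, Finset.sum_union hdisj]
  have h3 := hN2 n (le_trans (le_max_right _ _) hn)
  rw [Real.dist_eq, sub_zero] at h3
  have hnn : 0 ≤ ∑ j ∈ Icc (N + 1) n, c j * Q j n :=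
    Finset.sum_nonneg fun j _ => mul_nonneg (hc j) (hQ j n)
  calc |∑ j ∈ Icc 1 N, c j * Q j n + ∑ j ∈ Icc (N+1) n, c j * Q j n|
      ≤ |∑ j ∈ Icc 1 N, c j * Q j n| + |∑ j ∈ Icc (N+1) n, c j * Q j n| := abs_add_le _ _
    _ < ε := by rw [abs_of_nonneg hnn]; have := hN n; linarith

private lemma keyA (c : ℕ → ℝ) (Q : ℕ → ℕ → ℝ) (hc : ∀ j, 0 ≤ c j)
    (hQ : ∀ j n, 0 ≤ Q j n) (h1 : ∀ j, Tendsto (fun n => Q j n) atTop (nhds 0))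
    (MQ : ℝ) (hMQ : ∀ j n, Q j n ≤ MQ) (hsc : Summable c) :
    Tendsto (fun n => ∑ j ∈ Icc 1 n, c j * Q j n) atTop (nhds 0) := by
  have hMQ0 : 0 ≤ MQ := le_trans (hQ 0 0) (hMQ 0 0)
  refine key c Q hc hQ h1 (fun ε hε => ?_)
  have hball : Metric.ball (0:ℝ) (ε / (MQ + 1)) ∈ nhds (0:ℝ) :=
    Metric.ball_mem_nhds _ (by positivity)
  obtain ⟨s, hs⟩ := summable_iff_vanishing.mp hsc _ hball
  refine ⟨s.sup id, fun n => ?_⟩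
  have hdisj : Disjoint (Icc (s.sup id + 1) n) s := by
    rw [Finset.disjoint_left]
    intro a ha has
    have h1' := Finset.le_sup (f := id) has
    simp only [Finset.mem_Icc] at ha
    simp only [id] at h1'
    omega
  have h := hs _ hdisj
  rw [Metric.mem_ball, Real.dist_eq, sub_zero] at h
  have hsum_le : ∑ j ∈ Icc (s.sup id + 1) n, c j ≤ ε / (MQ + 1) :=
    le_trans (le_abs_self _) h.le
  calc ∑ j ∈ Icc (s.sup id + 1) n, c j * Q j n
      ≤ ∑ j ∈ Icc (s.sup id + 1) n, c j * MQ :=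
        Finset.sum_le_sum fun j _ => mul_le_mul_of_nonneg_left (hMQ j n) (hc j)
    _ = (∑ j ∈ Icc (s.sup id + 1) n, c j) * MQ := by rw [Finset.sum_mul]
    _ ≤ (ε / (MQ + 1)) * MQ := mul_le_mul_of_nonneg_right hsum_le hMQ0
    _ ≤ ε := by rw [div_mul_eq_mul_div, div_le_iff₀ (by positivity)]; nlinarith

private lemma keyB (c u : ℕ → ℝ) (Q : ℕ → ℕ → ℝ) (hc : ∀ j, 0 ≤ c j)
    (hu : ∀ j, 0 ≤ u j) (hQ : ∀ j n, 0 ≤ Q j n)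
    (h1 : ∀ j, Tendsto (fun n => Q j n) atTop (nhds 0)) (A : ℝ)
    (hA : ∀ n, ∑ j ∈ Icc 1 n, u j * Q j n ≤ A)
    (hsm : ∀ ε > 0, ∃ N, ∀ j, N ≤ j → c j ≤ ε * u j) :
    Tendsto (fun n => ∑ j ∈ Icc 1 n, c j * Q j n) atTop (nhds 0) := by
  have hA0 : 0 ≤ A := le_trans (by simp) (hA 0)
  refine key c Q hc hQ h1 (fun ε hε => ?_)
  obtain ⟨N, hN⟩ := hsm (ε / (A + 1)) (by positivity)
  refine ⟨N, fun n => ?_⟩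
  calc ∑ j ∈ Icc (N + 1) n, c j * Q j n
      ≤ ∑ j ∈ Icc (N + 1) n, (ε / (A + 1) * u j) * Q j n := by
        refine Finset.sum_le_sum fun j hj => ?_
        refine mul_le_mul_of_nonneg_right (hN j ?_) (hQ j n)
        simp only [Finset.mem_Icc] at hj; omega
    _ = ε / (A + 1) * ∑ j ∈ Icc (N + 1) n, u j * Q j n := by
        rw [Finset.mul_sum]; exact Finset.sum_congr rfl fun j _ => by ring
    _ ≤ ε / (A + 1) * ∑ j ∈ Icc 1 n, u j * Q j n := by
        refine mul_le_mul_of_nonneg_left (Finset.sum_le_sum_of_subset_of_nonneg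
          (Finset.Icc_subset_Icc (by omega) le_rfl)
          (fun j _ _ => mul_nonneg (hu j) (hQ j n))) (by positivity)
    _ ≤ ε / (A + 1) * A := mul_le_mul_of_nonneg_left (hA n) (by positivity)
    _ ≤ ε := by rw [div_mul_eq_mul_div, div_le_iff₀ (by positivity)]; nlinarith

theorem stmt2 (fbar : ℕ → ℝ) (x : ℕ → ℝ) (xlim : ℝ)
    (hpos : ∀ n, 1 ≤ n → 0 < fbar n)
    (hlim : Tendsto fbar atTop (nhds 1))
    (hdiv : ¬ Summable (fun n => max (1 - fbar n) 0))
    (hsum : Summable (fun n => max (fbar n - 1) 0))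
    (hbdd : ∃ C, ∀ n, |x n| ≤ C)
    (hx : Tendsto x (atTop ⊓ 𝓟 {n | fbar n < 1}) (nhds xlim))
    (k : ℕ) (hk : 1 ≤ k) :
    Tendsto (fun n => ∑ j ∈ Finset.Icc 1 n,
        ((1 - fbar j) * (∏ i ∈ Finset.Icc (j+1) n, fbar i) ^ k) * x j)
      atTop (nhds (xlim / k)) ∧
    Tendsto (fun n => ∑ j ∈ Finset.Icc 1 n,
        |(1 - fbar j) * (∏ i ∈ Finset.Icc (j+1) n, fbar i) ^ k| * x j)
      atTop (nhds (xlim / k)) := by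
  obtain ⟨C, hC⟩ := hbdd
  have hC0 : 0 ≤ C := le_trans (abs_nonneg _) (hC 0)
  have hk0 : k ≠ 0 := by omega
  have hkc : ((k:ℝ)) ≠ 0 := Nat.cast_ne_zero.mpr hk0
  -- global upper bound on fbar
  obtain ⟨B0, hB0⟩ := hlim.bddAbove_range
  set B := max B0 1 with hBdef
  have hB1 : (1:ℝ) ≤ B := le_max_right _ _
  have hBb : ∀ n, fbar n ≤ B := fun n => le_trans (hB0 (Set.mem_range_self n)) (le_max_left _ _)
  -- positivity of products
  have hPpos : ∀ j n : ℕ, (0:ℝ) < ∏ i ∈ Icc (j+1) n, fbar i := by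
    intro j n
    refine Finset.prod_pos fun i hi => hpos i ?_
    simp only [Finset.mem_Icc] at hi; omega
  have hQ0 : ∀ j n : ℕ, (0:ℝ) ≤ (∏ i ∈ Icc (j+1) n, fbar i) ^ k :=
    fun j n => pow_nonneg (hPpos j n).le k
  set T := ∑' n, max (fbar n - 1) 0 with hTdef
  have hPle : ∀ j n : ℕ, (∏ i ∈ Icc (j+1) n, fbar i) ≤ Real.exp T := by
    intro j n
    calc ∏ i ∈ Icc (j+1) n, fbar i
        ≤ ∏ i ∈ Icc (j+1) n, Real.exp (max (fbar i - 1) 0) := by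
          refine Finset.prod_le_prod (fun i hi => ?_) (fun i hi => ?_)
          · exact (hpos i (by simp only [Finset.mem_Icc] at hi; omega)).le
          · calc fbar i = (fbar i - 1) + 1 := by ring
              _ ≤ Real.exp (fbar i - 1) := Real.add_one_le_exp _
              _ ≤ Real.exp (max (fbar i - 1) 0) := Real.exp_le_exp.mpr (le_max_left _ _)
      _ = Real.exp (∑ i ∈ Icc (j+1) n, max (fbar i - 1) 0) := (Real.exp_sum _ _).symm
      _ ≤ Real.exp T := Real.exp_le_exp.mpr (Summable.sum_le_tsum _ (fun i _ => le_max_right _ _) hsum)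
  set MQ := Real.exp T ^ k with hMQdef
  have hMQ0 : 0 ≤ MQ := pow_nonneg (Real.exp_pos _).le k
  have hQle : ∀ j n : ℕ, (∏ i ∈ Icc (j+1) n, fbar i) ^ k ≤ MQ :=
    fun j n => pow_le_pow_left₀ (hPpos j n).le (hPle j n) k
  -- products tend to 0
  have hdivR : Tendsto (fun n => ∑ i ∈ range n, max (1 - fbar i) 0) atTop atTop :=
    (not_summable_iff_tendsto_nat_atTop_of_nonneg (fun i => le_max_right _ _)).mp hdiv
  have hQlim : ∀ j, Tendsto (fun n => (∏ i ∈ Icc (j+1) n, fbar i) ^ k) atTop (nhds 0) := by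
    intro j
    have hlog : Tendsto (fun n => ∑ i ∈ Icc (j+1) n, Real.log (fbar i)) atTop atBot := by
      have h5 : Tendsto (fun n : ℕ => ∑ i ∈ range (n+1), max (1 - fbar i) 0) atTop atTop :=
        hdivR.comp (tendsto_add_atTop_nat 1)
      have h6 : Tendsto (fun n : ℕ => (T + ∑ i ∈ range (j+1), max (1 - fbar i) 0)
          + -(∑ i ∈ range (n+1), max (1 - fbar i) 0)) atTop atBot :=
        tendsto_atBot_add_const_left atTop _ (tendsto_neg_atTop_atBot.comp h5)
      refine tendsto_atBot_mono' atTop ?_ h6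
      filter_upwards [eventually_ge_atTop j] with n hn
      have h1 : ∑ i ∈ Icc (j+1) n, Real.log (fbar i)
          ≤ ∑ i ∈ Icc (j+1) n, (max (fbar i - 1) 0 - max (1 - fbar i) 0) := by
        refine Finset.sum_le_sum fun i hi => ?_
        have hip : 0 < fbar i := hpos i (by simp only [Finset.mem_Icc] at hi; omega)
        have h2 := Real.log_le_sub_one_of_pos hip
        have h3 : fbar i - 1 = max (fbar i - 1) 0 - max (1 - fbar i) 0 := by
          rcases le_total (fbar i) 1 with h | h
          · rw [max_eq_right (by linarith), max_eq_left (by linarith)]; ring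
          · rw [max_eq_left (by linarith), max_eq_right (by linarith)]; ring
        linarith
      rw [Finset.sum_sub_distrib] at h1
      have h3 : ∑ i ∈ Icc (j+1) n, max (fbar i - 1) 0 ≤ T :=
        Summable.sum_le_tsum _ (fun i _ => le_max_right _ _) hsum
      have h4 : ∑ i ∈ Icc (j+1) n, max (1 - fbar i) 0
          = ∑ i ∈ range (n+1), max (1 - fbar i) 0 - ∑ i ∈ range (j+1), max (1 - fbar i) 0 := by
        rw [← Finset.Ico_add_one_right_eq_Icc, Finset.sum_Ico_eq_sub _ (by omega)]
      linarith
    have hPeq : (fun n => ∏ i ∈ Icc (j+1) n, fbar i)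
        = fun n => Real.exp (∑ i ∈ Icc (j+1) n, Real.log (fbar i)) := by
      funext n
      rw [Real.exp_sum]
      refine Finset.prod_congr rfl fun i hi => ?_
      rw [Real.exp_log (hpos i (by simp only [Finset.mem_Icc] at hi; omega))]
    have hPlim : Tendsto (fun n => ∏ i ∈ Icc (j+1) n, fbar i) atTop (nhds 0) := by
      rw [hPeq]; exact Real.tendsto_exp_atBot.comp hlog
    have h := hPlim.pow k
    simpa [zero_pow hk0] using h
  -- summability of (fbar^k - 1)_+
  have hsumk : Summable (fun j => max (fbar j ^ k - 1) 0) := by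
    have h2 : Summable (fun j => max (fbar (j+1) ^ k - 1) 0) := by
      have hs1 : Summable (fun j => (k:ℝ) * B ^ (k-1) * max (fbar (j+1) - 1) 0) :=
        ((summable_nat_add_iff 1).mpr hsum).mul_left _
      refine Summable.of_nonneg_of_le (fun j => le_max_right _ _) (fun j => ?_) hs1
      exact pow_sub_one_bound (fbar (j+1)) B k (hpos (j+1) (by omega)) (hBb (j+1)) hB1
    exact (summable_nat_add_iff 1).mp h2
  set Tk := ∑' j, max (fbar j ^ k - 1) 0 with hTkdef
  have hTk0 : 0 ≤ Tk := tsum_nonneg fun j => le_max_right _ _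
  -- uniform bound A on ∑ (1-b)_+ Q
  set A := 1 + Tk * MQ with hAdef
  have hA : ∀ n, ∑ j ∈ Icc 1 n,
      max (1 - fbar j ^ k) 0 * (∏ i ∈ Icc (j+1) n, fbar i) ^ k ≤ A := by
    intro n
    have hsplit : ∀ j : ℕ, max (1 - fbar j ^ k) 0
        = (1 - fbar j ^ k) + max (fbar j ^ k - 1) 0 := by
      intro j
      have h := max_eq_add_max (1 - fbar j ^ k)
      simpa [neg_sub] using h
    have e1 : ∑ j ∈ Icc 1 n, max (1 - fbar j ^ k) 0 * (∏ i ∈ Icc (j+1) n, fbar i) ^ k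
        = (1 - ∏ i ∈ Icc 1 n, fbar i ^ k)
          + ∑ j ∈ Icc 1 n, max (fbar j ^ k - 1) 0 * (∏ i ∈ Icc (j+1) n, fbar i) ^ k := by
      rw [← tele (fun i => fbar i ^ k) n, ← Finset.sum_add_distrib]
      refine Finset.sum_congr rfl fun j _ => ?_
      rw [hsplit j, ← Finset.prod_pow]
      ring
    rw [e1]
    have h1 : (0:ℝ) ≤ ∏ i ∈ Icc 1 n, fbar i ^ k := by
      rw [Finset.prod_pow]
      have := hQ0 0 n
      simpa using this
    have h2 : ∑ j ∈ Icc 1 n, max (fbar j ^ k - 1) 0 * (∏ i ∈ Icc (j+1) n, fbar i) ^ k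
        ≤ ∑ j ∈ Icc 1 n, max (fbar j ^ k - 1) 0 * MQ :=
      Finset.sum_le_sum fun j _ => mul_le_mul_of_nonneg_left (hQle j n) (le_max_right _ _)
    have h3 : ∑ j ∈ Icc 1 n, max (fbar j ^ k - 1) 0 ≤ Tk :=
      Summable.sum_le_tsum _ (fun j _ => le_max_right _ _) hsumk
    have h4 : ∑ j ∈ Icc 1 n, max (fbar j ^ k - 1) 0 * MQ
        = (∑ j ∈ Icc 1 n, max (fbar j ^ k - 1) 0) * MQ := by rw [Finset.sum_mul]
    have h5 : (∑ j ∈ Icc 1 n, max (fbar j ^ k - 1) 0) * MQ ≤ Tk * MQ :=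
      mul_le_mul_of_nonneg_right h3 hMQ0
    rw [hAdef]
    linarith [h2, h4 ▸ h5]
  -- eta
  set η := fun j => ∑ i ∈ range k, |1 - fbar j ^ i| with hηdef
  have hη0 : ∀ j, 0 ≤ η j := fun j => Finset.sum_nonneg fun i _ => abs_nonneg _
  have hηlim : Tendsto η atTop (nhds 0) := by
    have h : ∀ i ∈ range k, Tendsto (fun j => |1 - fbar j ^ i|) atTop (nhds 0) := by
      intro i _
      have h1 : Tendsto (fun j => fbar j ^ i) atTop (nhds 1) := by
        simpa using hlim.pow i
      have h2 := ((tendsto_const_nhds : Tendsto (fun _ : ℕ => (1:ℝ)) atTop (nhds 1)).sub h1).abs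
      simpa using h2
    have h' := tendsto_finset_sum (range k) h
    simpa using h'
  obtain ⟨H, hH⟩ := hηlim.bddAbove_range
  have hHb : ∀ j, η j ≤ H := fun j => hH (Set.mem_range_self j)
  have hH0 : 0 ≤ H := le_trans (hη0 0) (hHb 0)
  -- extraction from hx
  have hxE : ∀ ε > 0, ∃ N, ∀ j, N ≤ j → fbar j < 1 → |x j - xlim| ≤ ε := by
    intro ε hε
    have h := Metric.tendsto_nhds.mp hx ε hε
    rw [Filter.eventually_inf_principal] at h
    obtain ⟨N, hN⟩ := Filter.eventually_atTop.mp h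
    refine ⟨N, fun j hj hjS => ?_⟩
    have h' := hN j hj hjS
    rw [Real.dist_eq] at h'
    exact h'.le
  -- c3 limit (keyB)
  have hc3lim : Tendsto (fun n => ∑ j ∈ Icc 1 n,
      (max (1 - fbar j ^ k) 0 * |x j - xlim|) * (∏ i ∈ Icc (j+1) n, fbar i) ^ k)
      atTop (nhds 0) := by
    refine keyB (fun j => max (1 - fbar j ^ k) 0 * |x j - xlim|)
      (fun j => max (1 - fbar j ^ k) 0)
      (fun j n => (∏ i ∈ Icc (j+1) n, fbar i) ^ k)
      (fun j => mul_nonneg (le_max_right _ _) (abs_nonneg _))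
      (fun j => le_max_right _ _) hQ0 hQlim A hA ?_
    intro ε hε
    obtain ⟨N, hN⟩ := hxE ε hε
    refine ⟨N, fun j hj => ?_⟩
    by_cases hjS : fbar j < 1
    · have h := hN j hj hjS
      calc max (1 - fbar j ^ k) 0 * |x j - xlim| ≤ max (1 - fbar j ^ k) 0 * ε :=
            mul_le_mul_of_nonneg_left h (le_max_right _ _)
        _ = ε * max (1 - fbar j ^ k) 0 := mul_comm _ _
    · push_neg at hjS
      have hb1 : (1:ℝ) ≤ fbar j ^ k := one_le_pow₀ hjS
      show max (1 - fbar j ^ k) 0 * |x j - xlim| ≤ ε * max (1 - fbar j ^ k) 0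
      rw [max_eq_right (by linarith)]
      simp
  -- c4 limit (keyA)
  have hc4lim : Tendsto (fun n => ∑ j ∈ Icc 1 n,
      (max (fbar j ^ k - 1) 0 * (C + |xlim|)) * (∏ i ∈ Icc (j+1) n, fbar i) ^ k)
      atTop (nhds 0) :=
    keyA (fun j => max (fbar j ^ k - 1) 0 * (C + |xlim|))
      (fun j n => (∏ i ∈ Icc (j+1) n, fbar i) ^ k)
      (fun j => mul_nonneg (le_max_right _ _) (add_nonneg hC0 (abs_nonneg _)))
      hQ0 hQlim MQ hQle (hsumk.mul_right _)
  -- Step 1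
  have limit1 : Tendsto (fun n => ∑ j ∈ Icc 1 n,
      (1 - fbar j ^ k) * (∏ i ∈ Icc (j+1) n, fbar i) ^ k * x j) atTop (nhds xlim) := by
    have hy0 : Tendsto (fun n => ∑ j ∈ Icc 1 n,
        (1 - fbar j ^ k) * (∏ i ∈ Icc (j+1) n, fbar i) ^ k * (x j - xlim)) atTop (nhds 0) := by
      apply squeeze_zero_norm (a := fun n =>
        ∑ j ∈ Icc 1 n, (max (1 - fbar j ^ k) 0 * |x j - xlim|) * (∏ i ∈ Icc (j+1) n, fbar i) ^ k
        + ∑ j ∈ Icc 1 n, (max (fbar j ^ k - 1) 0 * (C + |xlim|)) * (∏ i ∈ Icc (j+1) n, fbar i) ^ k)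
        ?_ (by simpa using hc3lim.add hc4lim)
      intro n
      rw [Real.norm_eq_abs]
      calc |∑ j ∈ Icc 1 n, (1 - fbar j ^ k) * (∏ i ∈ Icc (j+1) n, fbar i) ^ k * (x j - xlim)|
          ≤ ∑ j ∈ Icc 1 n, |(1 - fbar j ^ k) * (∏ i ∈ Icc (j+1) n, fbar i) ^ k * (x j - xlim)| :=
            Finset.abs_sum_le_sum_abs _ _
        _ ≤ ∑ j ∈ Icc 1 n,
            ((max (1 - fbar j ^ k) 0 * |x j - xlim|) * (∏ i ∈ Icc (j+1) n, fbar i) ^ k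
              + (max (fbar j ^ k - 1) 0 * (C + |xlim|)) * (∏ i ∈ Icc (j+1) n, fbar i) ^ k) := by
            refine Finset.sum_le_sum fun j hj => ?_
            have hQnn := hQ0 j n
            have hy : |x j - xlim| ≤ C + |xlim| := by
              calc |x j - xlim| ≤ |x j| + |xlim| := abs_sub _ _
                _ ≤ C + |xlim| := by have := hC j; linarith
            rw [abs_mul, abs_mul, abs_of_nonneg hQnn]
            have habs : |1 - fbar j ^ k| = max (1 - fbar j ^ k) 0 + max (fbar j ^ k - 1) 0 := by
              have h := abs_eq_max_add_max (1 - fbar j ^ k)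
              simpa [neg_sub] using h
            rw [habs]
            have h1 : 0 ≤ max (1 - fbar j ^ k) 0 := le_max_right _ _
            have h2 : 0 ≤ max (fbar j ^ k - 1) 0 := le_max_right _ _
            have h3 : 0 ≤ |x j - xlim| := abs_nonneg _
            nlinarith [mul_le_mul_of_nonneg_right (mul_le_mul_of_nonneg_left hy h2) hQnn,
              mul_nonneg h1 hQnn, mul_nonneg h2 hQnn]
        _ = _ := Finset.sum_add_distrib
    have h0 : Tendsto (fun n => ∏ i ∈ Icc 1 n, fbar i ^ k) atTop (nhds 0) := by
      refine (hQlim 0).congr fun n => ?_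
      rw [Finset.prod_pow]
    have hconst : Tendsto (fun n => xlim * (1 - ∏ i ∈ Icc 1 n, fbar i ^ k)) atTop (nhds xlim) := by
      have h := ((tendsto_const_nhds : Tendsto (fun _ : ℕ => (1:ℝ)) atTop (nhds 1)).sub h0).const_mul xlim
      simpa using h
    have hrw : ∀ n, ∑ j ∈ Icc 1 n, (1 - fbar j ^ k) * (∏ i ∈ Icc (j+1) n, fbar i) ^ k * x j
        = xlim * (1 - ∏ i ∈ Icc 1 n, fbar i ^ k)
          + ∑ j ∈ Icc 1 n, (1 - fbar j ^ k) * (∏ i ∈ Icc (j+1) n, fbar i) ^ k * (x j - xlim) := by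
      intro n
      rw [← tele (fun i => fbar i ^ k) n, Finset.mul_sum, ← Finset.sum_add_distrib]
      refine Finset.sum_congr rfl fun j _ => ?_
      rw [← Finset.prod_pow]
      ring
    have h := hconst.add hy0
    rw [add_zero] at h
    exact h.congr fun n => (hrw n).symm
  -- identity for the error term
  have hidk : ∀ g : ℝ, (k:ℝ) * (1 - g) - (1 - g ^ k) = (1 - g) * ∑ i ∈ range k, (1 - g ^ i) := by
    intro g
    have h1 : (∑ i ∈ range k, g ^ i) * (g - 1) = g ^ k - 1 := geom_sum_mul g k
    have h2 : ∑ i ∈ range k, ((1:ℝ) - g ^ i) = (k:ℝ) - ∑ i ∈ range k, g ^ i := by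
      rw [Finset.sum_sub_distrib, Finset.sum_const, Finset.card_range, nsmul_eq_mul, mul_one]
    rw [h2]
    linear_combination -h1
  -- c5 limit (keyB)
  have hc5lim : Tendsto (fun n => ∑ j ∈ Icc 1 n,
      (η j * C * max (1 - fbar j ^ k) 0) * (∏ i ∈ Icc (j+1) n, fbar i) ^ k) atTop (nhds 0) := by
    refine keyB (fun j => η j * C * max (1 - fbar j ^ k) 0)
      (fun j => max (1 - fbar j ^ k) 0)
      (fun j n => (∏ i ∈ Icc (j+1) n, fbar i) ^ k)
      (fun j => mul_nonneg (mul_nonneg (hη0 j) hC0) (le_max_right _ _))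
      (fun j => le_max_right _ _) hQ0 hQlim A hA ?_
    intro ε hε
    obtain ⟨N, hN⟩ := Metric.tendsto_atTop.mp hηlim (ε / (C+1)) (by positivity)
    refine ⟨N, fun j hj => ?_⟩
    have h := hN j hj
    rw [Real.dist_eq, sub_zero, abs_of_nonneg (hη0 j)] at h
    have h2 : η j * C ≤ ε := by
      calc η j * C ≤ (ε / (C+1)) * C := mul_le_mul_of_nonneg_right h.le hC0
        _ ≤ ε := by rw [div_mul_eq_mul_div, div_le_iff₀ (by positivity)]; nlinarith
    exact mul_le_mul_of_nonneg_right h2 (le_max_right _ _)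
  -- c6 limit (keyA)
  have hsumc6 : Summable (fun j => η j * C * max (fbar j ^ k - 1) 0) := by
    refine Summable.of_nonneg_of_le
      (fun j => mul_nonneg (mul_nonneg (hη0 j) hC0) (le_max_right _ _))
      (fun j => ?_) (hsumk.mul_left (H * C))
    exact mul_le_mul_of_nonneg_right (mul_le_mul_of_nonneg_right (hHb j) hC0) (le_max_right _ _)
  have hc6lim : Tendsto (fun n => ∑ j ∈ Icc 1 n,
      (η j * C * max (fbar j ^ k - 1) 0) * (∏ i ∈ Icc (j+1) n, fbar i) ^ k) atTop (nhds 0) :=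
    keyA (fun j => η j * C * max (fbar j ^ k - 1) 0)
      (fun j n => (∏ i ∈ Icc (j+1) n, fbar i) ^ k)
      (fun j => mul_nonneg (mul_nonneg (hη0 j) hC0) (le_max_right _ _))
      hQ0 hQlim MQ hQle hsumc6
  -- error term tends to 0
  have limitE : Tendsto (fun n => ∑ j ∈ Icc 1 n,
      ((k:ℝ) * (1 - fbar j) - (1 - fbar j ^ k)) * (∏ i ∈ Icc (j+1) n, fbar i) ^ k * x j)
      atTop (nhds 0) := by
    apply squeeze_zero_norm (a := fun n =>
      ∑ j ∈ Icc 1 n, (η j * C * max (1 - fbar j ^ k) 0) * (∏ i ∈ Icc (j+1) n, fbar i) ^ k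
      + ∑ j ∈ Icc 1 n, (η j * C * max (fbar j ^ k - 1) 0) * (∏ i ∈ Icc (j+1) n, fbar i) ^ k)
      ?_ (by simpa using hc5lim.add hc6lim)
    intro n
    rw [Real.norm_eq_abs]
    calc |∑ j ∈ Icc 1 n, ((k:ℝ) * (1 - fbar j) - (1 - fbar j ^ k)) * (∏ i ∈ Icc (j+1) n, fbar i) ^ k * x j|
        ≤ ∑ j ∈ Icc 1 n, |((k:ℝ) * (1 - fbar j) - (1 - fbar j ^ k)) * (∏ i ∈ Icc (j+1) n, fbar i) ^ k * x j| :=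
          Finset.abs_sum_le_sum_abs _ _
      _ ≤ ∑ j ∈ Icc 1 n,
          ((η j * C * max (1 - fbar j ^ k) 0) * (∏ i ∈ Icc (j+1) n, fbar i) ^ k
            + (η j * C * max (fbar j ^ k - 1) 0) * (∏ i ∈ Icc (j+1) n, fbar i) ^ k) := by
          refine Finset.sum_le_sum fun j hj => ?_
          have hjpos : 0 < fbar j := hpos j (by simp only [Finset.mem_Icc] at hj; omega)
          have hQnn := hQ0 j n
          have herr : |(k:ℝ) * (1 - fbar j) - (1 - fbar j ^ k)| ≤ |1 - fbar j| * η j := by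
            rw [hidk, abs_mul]
            exact mul_le_mul_of_nonneg_left (Finset.abs_sum_le_sum_abs _ _) (abs_nonneg _)
          have habs1 : |1 - fbar j| ≤ max (1 - fbar j ^ k) 0 + max (fbar j ^ k - 1) 0 :=
            abs_one_sub_le _ k hk hjpos
          rw [abs_mul, abs_mul, abs_of_nonneg hQnn]
          calc |(k:ℝ) * (1 - fbar j) - (1 - fbar j ^ k)| * (∏ i ∈ Icc (j+1) n, fbar i) ^ k * |x j|
              ≤ (|1 - fbar j| * η j) * (∏ i ∈ Icc (j+1) n, fbar i) ^ k * C := by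
                refine mul_le_mul ?_ (hC j) (abs_nonneg _) ?_
                · exact mul_le_mul_of_nonneg_right herr hQnn
                · exact mul_nonneg (mul_nonneg (abs_nonneg _) (hη0 j)) hQnn
            _ ≤ ((max (1 - fbar j ^ k) 0 + max (fbar j ^ k - 1) 0) * η j)
                  * (∏ i ∈ Icc (j+1) n, fbar i) ^ k * C :=
                mul_le_mul_of_nonneg_right (mul_le_mul_of_nonneg_right
                  (mul_le_mul_of_nonneg_right habs1 (hη0 j)) hQnn) hC0
            _ = (η j * C * max (1 - fbar j ^ k) 0) * (∏ i ∈ Icc (j+1) n, fbar i) ^ k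
                  + (η j * C * max (fbar j ^ k - 1) 0) * (∏ i ∈ Icc (j+1) n, fbar i) ^ k := by
                ring
      _ = _ := Finset.sum_add_distrib
  -- combine: k * S → xlim
  have hkS : Tendsto (fun n => (k:ℝ) * ∑ j ∈ Icc 1 n,
      (1 - fbar j) * (∏ i ∈ Icc (j+1) n, fbar i) ^ k * x j) atTop (nhds xlim) := by
    have hdecomp : ∀ n, (k:ℝ) * ∑ j ∈ Icc 1 n, (1 - fbar j) * (∏ i ∈ Icc (j+1) n, fbar i) ^ k * x j
        = (∑ j ∈ Icc 1 n, (1 - fbar j ^ k) * (∏ i ∈ Icc (j+1) n, fbar i) ^ k * x j)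
          + ∑ j ∈ Icc 1 n, ((k:ℝ) * (1 - fbar j) - (1 - fbar j ^ k)) * (∏ i ∈ Icc (j+1) n, fbar i) ^ k * x j := by
      intro n
      rw [Finset.mul_sum, ← Finset.sum_add_distrib]
      exact Finset.sum_congr rfl fun j _ => by ring
    have h := limit1.add limitE
    rw [add_zero] at h
    exact h.congr fun n => (hdecomp n).symm
  have hS1 : Tendsto (fun n => ∑ j ∈ Icc 1 n,
      (1 - fbar j) * (∏ i ∈ Icc (j+1) n, fbar i) ^ k * x j) atTop (nhds (xlim / k)) := by
    have h := hkS.div_const (k:ℝ)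
    exact h.congr fun n => by rw [mul_div_cancel_left₀ _ hkc]
  -- extra term for the absolute-value version
  have hc7lim : Tendsto (fun n => ∑ j ∈ Icc 1 n,
      (max (fbar j - 1) 0 * (2 * C)) * (∏ i ∈ Icc (j+1) n, fbar i) ^ k) atTop (nhds 0) :=
    keyA (fun j => max (fbar j - 1) 0 * (2 * C))
      (fun j n => (∏ i ∈ Icc (j+1) n, fbar i) ^ k)
      (fun j => mul_nonneg (le_max_right _ _) (by linarith))
      hQ0 hQlim MQ hQle (hsum.mul_right _)
  have hextra : Tendsto (fun n => ∑ j ∈ Icc 1 n,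
      (2 * max (fbar j - 1) 0) * (∏ i ∈ Icc (j+1) n, fbar i) ^ k * x j) atTop (nhds 0) := by
    apply squeeze_zero_norm (a := fun n => ∑ j ∈ Icc 1 n,
      (max (fbar j - 1) 0 * (2 * C)) * (∏ i ∈ Icc (j+1) n, fbar i) ^ k) ?_ hc7lim
    intro n
    rw [Real.norm_eq_abs]
    calc |∑ j ∈ Icc 1 n, (2 * max (fbar j - 1) 0) * (∏ i ∈ Icc (j+1) n, fbar i) ^ k * x j|
        ≤ ∑ j ∈ Icc 1 n, |(2 * max (fbar j - 1) 0) * (∏ i ∈ Icc (j+1) n, fbar i) ^ k * x j| :=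
          Finset.abs_sum_le_sum_abs _ _
      _ ≤ ∑ j ∈ Icc 1 n, (max (fbar j - 1) 0 * (2 * C)) * (∏ i ∈ Icc (j+1) n, fbar i) ^ k := by
          refine Finset.sum_le_sum fun j hj => ?_
          have hQnn := hQ0 j n
          have hm : (0:ℝ) ≤ max (fbar j - 1) 0 := le_max_right _ _
          rw [abs_mul, abs_mul, abs_of_nonneg hQnn,
            abs_of_nonneg (by linarith : (0:ℝ) ≤ 2 * max (fbar j - 1) 0)]
          calc 2 * max (fbar j - 1) 0 * (∏ i ∈ Icc (j+1) n, fbar i) ^ k * |x j|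
              ≤ 2 * max (fbar j - 1) 0 * (∏ i ∈ Icc (j+1) n, fbar i) ^ k * C :=
                mul_le_mul_of_nonneg_left (hC j) (by positivity)
            _ = (max (fbar j - 1) 0 * (2 * C)) * (∏ i ∈ Icc (j+1) n, fbar i) ^ k := by ring
  have habs_eq : ∀ n, ∑ j ∈ Icc 1 n, |(1 - fbar j) * (∏ i ∈ Icc (j+1) n, fbar i) ^ k| * x j
      = ∑ j ∈ Icc 1 n, (1 - fbar j) * (∏ i ∈ Icc (j+1) n, fbar i) ^ k * x j
        + ∑ j ∈ Icc 1 n, (2 * max (fbar j - 1) 0) * (∏ i ∈ Icc (j+1) n, fbar i) ^ k * x j := by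
    intro n
    rw [← Finset.sum_add_distrib]
    refine Finset.sum_congr rfl fun j _ => ?_
    rw [abs_mul, abs_of_nonneg (hQ0 j n), abs_eq_add_two_max (1 - fbar j), neg_sub]
    ring
  refine ⟨hS1, ?_⟩
  have h := hS1.add hextra
  rw [add_zero] at h
  exact h.congr fun n => (habs_eq n).symm
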